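/- Let T, σ > 0, μ > ρ, and B(T) ~ N(0,T). With f* = 1_{x > (T/σ)(ρ − μ + σ²/2)}, one has E[(1 − f*(B(T)))·exp(ρT) + f*(B(T))·exp((μ − σ²/2)T + σB(T))] = Φ((σ² + 2ρ − 2μ)√T/(2σ))·exp(ρT) + Φ((σ² − 2ρ + 2μ)√T/(2σ))·exp(μT). -/

import Mathlib

open MeasureTheory ProbabilityTheory

noncomputable def stdNormalCDF (z : ℝ) : ℝ :=
  ∫ s in Set.Iic z, (Real.sqrt (2 * Real.pi))⁻¹ * Real.exp (-s ^ 2 / 2)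

-- step lemmas to test individually
lemma setIntegral_pdf_eq (m : ℝ) {v : NNReal} (hv : v ≠ 0) (s : Set ℝ) (hs : MeasurableSet s) :
    ∫ x in s, gaussianPDFReal m v x = (gaussianReal m v s).toReal := by
  rw [gaussianReal_apply_eq_integral m hv s, ENNReal.toReal_ofReal]
  exact setIntegral_nonneg hs (fun x _ => gaussianPDFReal_nonneg m v x)

lemma stdNormalCDF_eq (z : ℝ) :
    stdNormalCDF z = (gaussianReal 0 1 (Set.Iic z)).toReal := by
  rw [stdNormalCDF, ← setIntegral_pdf_eq 0 one_ne_zero _ measurableSet_Iic]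
  congr 1
  ext s
  simp [gaussianPDFReal]

lemma gauss_scale (hT : 0 < T) :
    gaussianReal 0 (⟨T, hT.le⟩ : NNReal) =
      (gaussianReal 0 1).map (· * Real.sqrt T) := by
  rw [gaussianReal_map_mul_const (Real.sqrt T)]
  congr 1
  · ring
  · ext
    simp [Real.sq_sqrt hT.le]
    rfl

lemma gauss_symm : (gaussianReal 0 1).map ((-1 : ℝ) * ·) = gaussianReal 0 1 := by
  rw [gaussianReal_map_const_mul (-1 : ℝ)]
  norm_num

lemma gauss01_Ioi (a : ℝ) :
    gaussianReal 0 1 (Set.Ioi a) = gaussianReal 0 1 (Set.Iic (-a)) := by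
  conv_lhs => rw [← gauss_symm]
  rw [Measure.map_apply (measurable_const_mul _) measurableSet_Ioi]
  have hpre : ((-1 : ℝ) * ·) ⁻¹' Set.Ioi a = Set.Iio (-a) := by
    ext x; simp [lt_neg]
  rw [hpre]
  refine measure_congr (Filter.EventuallyEq.symm ?_)
  rw [Filter.eventuallyEq_set]
  have h0 : gaussianReal 0 1 {(-a : ℝ)} = 0 :=
    gaussianReal_absolutelyContinuous 0 one_ne_zero Real.volume_singleton
  filter_upwards [measure_eq_zero_iff_ae_notMem.mp h0] with x hx
  simp only [Set.mem_Iic, Set.mem_Iio]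
  constructor
  · intro h; rcases lt_or_eq_of_le h with h | h
    · exact h
    · exact absurd (by simp [h]) hx
  · exact le_of_lt

lemma gauss_Iic (hT : 0 < T) (c : ℝ) :
    gaussianReal 0 (⟨T, hT.le⟩ : NNReal) (Set.Iic c)
      = gaussianReal 0 1 (Set.Iic (c / Real.sqrt T)) := by
  rw [gauss_scale hT, Measure.map_apply (measurable_mul_const _) measurableSet_Iic]
  congr 1
  ext x
  simp [le_div_iff₀ (Real.sqrt_pos.mpr hT)]

lemma gauss_Ioi (hT : 0 < T) (c : ℝ) :
    gaussianReal 0 (⟨T, hT.le⟩ : NNReal) (Set.Ioi c)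
      = gaussianReal 0 1 (Set.Iic (-(c / Real.sqrt T))) := by
  rw [gauss_scale hT, Measure.map_apply (measurable_mul_const _) measurableSet_Ioi]
  rw [show (· * Real.sqrt T) ⁻¹' Set.Ioi c = Set.Ioi (c / Real.sqrt T) by
    ext x; simp [div_lt_iff₀ (Real.sqrt_pos.mpr hT)]]
  exact gauss01_Ioi _

lemma gauss_shift_Ioi (hT : 0 < T) (m c : ℝ) :
    gaussianReal m (⟨T, hT.le⟩ : NNReal) (Set.Ioi c)
      = gaussianReal 0 (⟨T, hT.le⟩ : NNReal) (Set.Ioi (c - m)) := by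
  have := gaussianReal_map_add_const (μ := 0) (v := ⟨T, hT.le⟩) m
  rw [zero_add] at this
  rw [← this, Measure.map_apply (measurable_add_const _) measurableSet_Ioi]
  congr 1
  ext x
  simp [lt_sub_iff_add_lt]

lemma exp_tilt (hT : 0 < T) (σ ρ μ x : ℝ) :
    gaussianPDFReal 0 (⟨T, hT.le⟩ : NNReal) x * Real.exp ((μ - σ ^ 2 / 2) * T + σ * x)
      = Real.exp (μ * T) * gaussianPDFReal (σ * T) (⟨T, hT.le⟩ : NNReal) x := by
  simp only [gaussianPDFReal, NNReal.coe_mk, sub_zero]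
  change (√(2 * Real.pi * T))⁻¹ * Real.exp (-x ^ 2 / (2 * T)) * Real.exp ((μ - σ ^ 2 / 2) * T + σ * x) = Real.exp (μ * T) * ((√(2 * Real.pi * T))⁻¹ * Real.exp (-(x - σ * T) ^ 2 / (2 * T)))
  have h : Real.exp (-x ^ 2 / (2 * T)) * Real.exp ((μ - σ ^ 2 / 2) * T + σ * x)
      = Real.exp (μ * T) * Real.exp (-(x - σ * T) ^ 2 / (2 * T)) := by
    rw [← Real.exp_add, ← Real.exp_add]
    congr 1
    field_simp
    ring
  linear_combination (Real.sqrt (2 * Real.pi * T))⁻¹ * h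

theorem stmt_10 (T σ ρ μ : ℝ) (hT : 0 < T) (hσ : 0 < σ) (hρμ : ρ < μ) :
    (∫ x, ((1 - (if (T / σ) * (ρ - μ + σ ^ 2 / 2) < x then (1 : ℝ) else 0)) * Real.exp (ρ * T) +
        (if (T / σ) * (ρ - μ + σ ^ 2 / 2) < x then (1 : ℝ) else 0) *
          Real.exp ((μ - σ ^ 2 / 2) * T + σ * x)) ∂(gaussianReal 0 ⟨T, hT.le⟩)) =
      stdNormalCDF ((σ ^ 2 + 2 * ρ - 2 * μ) * Real.sqrt T / (2 * σ)) * Real.exp (ρ * T) +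
      stdNormalCDF ((σ ^ 2 - 2 * ρ + 2 * μ) * Real.sqrt T / (2 * σ)) * Real.exp (μ * T) := by
  set c : ℝ := (T / σ) * (ρ - μ + σ ^ 2 / 2) with hc
  set vT : NNReal := ⟨T, hT.le⟩ with hvT
  have hvT0 : vT ≠ 0 := by
    simp only [hvT, ne_eq, ← NNReal.coe_eq_zero, NNReal.coe_mk]
    exact fun h => hT.ne' (congrArg NNReal.toReal h)
  have hmeas : Measurable fun x => (gaussianPDFReal 0 vT x).toNNReal :=
    (measurable_gaussianPDFReal 0 vT).real_toNNReal
  rw [gaussianReal_of_var_ne_zero 0 hvT0,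
    show gaussianPDF 0 vT = fun x => ((gaussianPDFReal 0 vT x).toNNReal : ENNReal) from rfl,
    integral_withDensity_eq_integral_smul hmeas]
  have hfun : (fun x => (gaussianPDFReal 0 vT x).toNNReal •
        ((1 - (if c < x then (1 : ℝ) else 0)) * Real.exp (ρ * T) +
          (if c < x then (1 : ℝ) else 0) * Real.exp ((μ - σ ^ 2 / 2) * T + σ * x)))
      = fun x => Set.indicator (Set.Iic c) (fun y => Real.exp (ρ * T) * gaussianPDFReal 0 vT y) x
        + Set.indicator (Set.Ioi c) (fun y => Real.exp (μ * T) * gaussianPDFReal (σ * T) vT y) x := by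
    funext x
    have hco : ((gaussianPDFReal 0 vT x).toNNReal : ℝ) = gaussianPDFReal 0 vT x :=
      Real.coe_toNNReal _ (gaussianPDFReal_nonneg 0 vT x)
    rw [NNReal.smul_def, smul_eq_mul, hco]
    by_cases h : c < x
    · simp only [if_pos h, Set.indicator_of_notMem (by simpa using h : x ∉ Set.Iic c),
        Set.indicator_of_mem (Set.mem_Ioi.mpr h), sub_self, zero_mul, one_mul, zero_add]
      exact exp_tilt hT σ ρ μ x
    · simp only [if_neg h, Set.indicator_of_mem (Set.mem_Iic.mpr (not_lt.mp h)),
        Set.indicator_of_notMem (by simpa using h : x ∉ Set.Ioi c), sub_zero, zero_mul,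
        one_mul, add_zero, mul_comm]
  rw [hfun]
  have i1 : Integrable (Set.indicator (Set.Iic c)
      (fun y => Real.exp (ρ * T) * gaussianPDFReal 0 vT y)) volume :=
    ((integrable_gaussianPDFReal 0 vT).const_mul _).indicator measurableSet_Iic
  have i2 : Integrable (Set.indicator (Set.Ioi c)
      (fun y => Real.exp (μ * T) * gaussianPDFReal (σ * T) vT y)) volume :=
    ((integrable_gaussianPDFReal (σ * T) vT).const_mul _).indicator measurableSet_Ioi
  rw [integral_add i1 i2, integral_indicator measurableSet_Iic,
    integral_indicator measurableSet_Ioi, integral_const_mul, integral_const_mul,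
    setIntegral_pdf_eq 0 hvT0 _ measurableSet_Iic,
    setIntegral_pdf_eq (σ * T) hvT0 _ measurableSet_Ioi,
    gauss_Iic hT, gauss_shift_Ioi hT, gauss_Ioi hT, ← stdNormalCDF_eq, ← stdNormalCDF_eq]
  have hs : Real.sqrt T * Real.sqrt T = T := Real.mul_self_sqrt hT.le
  have hs0 : Real.sqrt T ≠ 0 := ne_of_gt (Real.sqrt_pos.mpr hT)
  have h1 : c / Real.sqrt T = (σ ^ 2 + 2 * ρ - 2 * μ) * Real.sqrt T / (2 * σ) := by
    rw [hc, ← hs]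
    field_simp
    rw [Real.sqrt_sq (Real.sqrt_nonneg T)]
    ring
  have h2 : -((c - σ * T) / Real.sqrt T)
      = (σ ^ 2 - 2 * ρ + 2 * μ) * Real.sqrt T / (2 * σ) := by
    rw [hc, ← hs]
    field_simp
    rw [Real.sqrt_sq (Real.sqrt_nonneg T)]
    ring
  rw [h1, h2]
  ring
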